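/- Let V be a finite type with n = Fintype.card V and E : Fin m → Sym2 V a multigraph on V. For any finite set S of edge indices, if G−S is decodable then S.card ≤ m − n. Consequently c_x^G = 0 for every x > m − n. -/
import Mathlib


/-- `e` is a loop index at vertex `v`. -/
def IsLoopIdx {V : Type*} {m : ℕ} (E : Fin m → Sym2 V) (v : V) (e : Fin m) : Prop :=
  E e = Sym2.diag v

/-- `u` and `v` are connected in the multigraph `E` with the edge indices in `S` deleted. -/
def ConnectedMod {V : Type*} {m : ℕ} (E : Fin m → Sym2 V) (S : Finset (Fin m))
    (u v : V) : Prop :=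
  Relation.EqvGen (fun a b => ∃ e : Fin m, e ∉ S ∧ E e = s(a, b)) u v

/-- `G − S` is decodable: every vertex is connected in `G − S` to a vertex with a loop
outside `S`. -/
def DecodableMod {V : Type*} {m : ℕ} (E : Fin m → Sym2 V) (S : Finset (Fin m)) : Prop :=
  ∀ u : V, ∃ v : V, (∃ e : Fin m, e ∉ S ∧ IsLoopIdx E v e) ∧ ConnectedMod E S u v

def IsDecodable {V : Type*} {m : ℕ} (E : Fin m → Sym2 V) : Prop :=
  DecodableMod E ∅

/-- `c_x^G`: the number of `x`-element sets of edge indices whose deletion leaves a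
decodable graph. -/
noncomputable def cG {V : Type*} {m : ℕ} (E : Fin m → Sym2 V) (x : ℕ) : ℕ :=
  Set.ncard {S : Finset (Fin m) | S.card = x ∧ DecodableMod E S}

/-- `k_x^G = C(m,x) − c_x^G`. -/
noncomputable def kG {V : Type*} {m : ℕ} (E : Fin m → Sym2 V) (x : ℕ) : ℕ :=
  Nat.choose m x - cG E x

/-- `m(G)`: the minimum cardinality of a loop cut. -/
noncomputable def mCut {V : Type*} {m : ℕ} (E : Fin m → Sym2 V) : ℕ :=
  sInf {k : ℕ | ∃ S : Finset (Fin m), S.card = k ∧ ¬ DecodableMod E S}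

/-- incidence degree of `v` (a loop at `v` counts once). -/
noncomputable def dI {V : Type*} {m : ℕ} (E : Fin m → Sym2 V) (v : V) : ℕ :=
  Set.ncard {e : Fin m | v ∈ E e}

/-- `δ_I(G)`: the minimum incidence degree. -/
noncomputable def deltaI {V : Type*} {m : ℕ} (E : Fin m → Sym2 V) : ℕ :=
  sInf (Set.range (dI E))

/-- `L_G`: the number of loop indices. -/
noncomputable def LG {V : Type*} {m : ℕ} (E : Fin m → Sym2 V) : ℕ :=
  Set.ncard {e : Fin m | ∃ v : V, E e = Sym2.diag v}

/-- `δ_ℓ(v)`: the number of loop indices at `v`. -/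
noncomputable def loopsAt {V : Type*} {m : ℕ} (E : Fin m → Sym2 V) (v : V) : ℕ :=
  Set.ncard {e : Fin m | E e = Sym2.diag v}

/-- `Δ_ℓ(G)`: the maximum number of loops at a single vertex. -/
noncomputable def DeltaLoops {V : Type*} {m : ℕ} (E : Fin m → Sym2 V) : ℕ :=
  sSup (Set.range (loopsAt E))

/-- `κ_G`: the edge connectivity. -/
noncomputable def kappaG {V : Type*} {m : ℕ} (E : Fin m → Sym2 V) : ℕ :=
  sInf {k : ℕ | ∃ S : Finset (Fin m), S.card = k ∧ ∃ u v : V, ¬ ConnectedMod E S u v}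

/-- `reachN E S k u` : there is a walk of length `k` from `u` (avoiding `S`) ending at a
vertex with a loop outside `S`. -/
def reachN {V : Type*} {m : ℕ} (E : Fin m → Sym2 V) (S : Finset (Fin m)) :
    ℕ → V → Prop
  | 0, u => ∃ e : Fin m, e ∉ S ∧ E e = Sym2.diag u
  | (k+1), u => ∃ v, (∃ e : Fin m, e ∉ S ∧ E e = s(u, v)) ∧ reachN E S k v

lemma reach_iff_of_connected {V : Type*} {m : ℕ} {E : Fin m → Sym2 V} {S : Finset (Fin m)}
    {u v : V} (h : ConnectedMod E S u v) :
    (∃ k, reachN E S k u) ↔ (∃ k, reachN E S k v) := by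
  induction h with
  | rel a b hab =>
      obtain ⟨e, heS, hev⟩ := hab
      constructor
      · rintro ⟨k, hk⟩
        exact ⟨k + 1, a, ⟨e, heS, by rw [hev, Sym2.eq_swap]⟩, hk⟩
      · rintro ⟨k, hk⟩
        exact ⟨k + 1, b, ⟨e, heS, hev⟩, hk⟩
  | refl a => exact Iff.rfl
  | symm a b _ ih => exact ih.symm
  | trans a b c _ _ ih₁ ih₂ => exact ih₁.trans ih₂

lemma card_le_of_decodable {V : Type*} [Fintype V] {m : ℕ} (E : Fin m → Sym2 V)
    (S : Finset (Fin m)) (hS : DecodableMod E S) : S.card ≤ m - Fintype.card V := by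
  classical
  have hreach : ∀ u : V, ∃ k, reachN E S k u := by
    intro u
    obtain ⟨v, ⟨e, heS, hev⟩, hconn⟩ := hS u
    exact (reach_iff_of_connected hconn).mpr ⟨0, e, heS, hev⟩
  set d : V → ℕ := fun u => Nat.find (hreach u) with hd
  have hedge : ∀ u : V, ∃ e : Fin m, e ∉ S ∧
      (E e = Sym2.diag u ∨ ∃ v, E e = s(u, v) ∧ d v < d u) := by
    intro u
    have hr : reachN E S (d u) u := Nat.find_spec (hreach u)
    rcases hdu : d u with _ | k
    · rw [hdu] at hr
      obtain ⟨e, he, hev⟩ := hr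
      exact ⟨e, he, Or.inl hev⟩
    · rw [hdu] at hr
      obtain ⟨v, ⟨e, he, hev⟩, hrv⟩ := hr
      refine ⟨e, he, Or.inr ⟨v, hev, ?_⟩⟩
      have : d v ≤ k := Nat.find_le hrv
      omega
  choose f hfS hfP using hedge
  have hinj : Function.Injective f := by
    intro u u' huu'
    by_contra hne
    rcases hfP u with h1 | ⟨v, hv, hdv⟩ <;> rcases hfP u' with h2 | ⟨v', hv', hdv'⟩
    · rw [huu', h2] at h1
      exact hne (Sym2.diag_injective h1).symm
    · rw [huu', hv'] at h1
      rw [Sym2.diag, Sym2.eq_iff] at h1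
      obtain ⟨rfl, rfl⟩ | ⟨rfl, rfl⟩ := h1.symm <;> omega
    · rw [← huu', hv] at h2
      rw [Sym2.diag, Sym2.eq_iff] at h2
      obtain ⟨rfl, rfl⟩ | ⟨rfl, rfl⟩ := h2.symm <;> omega
    · rw [huu', hv'] at hv
      rw [Sym2.eq_iff] at hv
      obtain ⟨rfl, rfl⟩ | ⟨rfl, rfl⟩ := hv
      · exact hne rfl
      · omega
  have hcard : Fintype.card V ≤ Sᶜ.card := by
    have := Finset.card_le_card_of_injOn (s := (Finset.univ : Finset V)) f
      (fun u _ => Finset.mem_compl.mpr (hfS u)) hinj.injOn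
    simpa using this
  have h1 : Sᶜ.card = m - S.card := by
    rw [Finset.card_compl, Fintype.card_fin]
  have h2 : S.card ≤ m := by
    simpa using Finset.card_le_card (Finset.subset_univ S)
  omega

theorem stmt3 {V : Type*} [Fintype V] {m : ℕ} (E : Fin m → Sym2 V) :
    (∀ S : Finset (Fin m), DecodableMod E S → S.card ≤ m - Fintype.card V) ∧
      (∀ x : ℕ, m - Fintype.card V < x → cG E x = 0) := by
  refine ⟨card_le_of_decodable E, fun x hx => ?_⟩
  have hempty : {S : Finset (Fin m) | S.card = x ∧ DecodableMod E S} = ∅ := by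
    ext S
    simp only [Set.mem_setOf_eq, Set.mem_empty_iff_false, iff_false, not_and]
    intro hcard hdec
    have := card_le_of_decodable E S hdec
    omega
  rw [cG, hempty, Set.ncard_empty]
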